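/- For every typical weight λ, the operator T_{λ,λ} on L(λ)⊗L(λ) acts as the scalar a₁ = (−1)^{|λ|}q^{−(λ,λ)} on the subspace span{v₀⊗v₀, Δ(F)(v₀⊗v₀)} and as the scalar a₂ = (−1)^{|λ|+1}q^{−(λ,λ)+2(λ₁+λ₂)} on the subspace span{v₁⊗v₁, Δ(E)(v₁⊗v₁)}; moreover a₁ ≠ a₂, so T_{λ,λ} is not a scalar multiple of the identity. -/

import Mathlib

set_option synthInstance.maxHeartbeats 1000000
set_option maxHeartbeats 1000000
noncomputable section
open scoped TensorProduct

abbrev F : Type := RatFunc ℂ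
def q : F := RatFunc.X

/-- The quantum integer [n] = (qⁿ − q⁻ⁿ)/(q − q⁻¹). -/
def qn (n : ℤ) : F := (q ^ n - q ^ (-n)) / (q - q⁻¹)

abbrev V : Type := Fin 2 → F
def v0 : V := Pi.single 0 1
def v1 : V := Pi.single 1 1

def Eop : V →ₗ[F] V := Matrix.toLin' !![0, 1; 0, 0]
def Fop (l : ℤ × ℤ) : V →ₗ[F] V := Matrix.toLin' !![0, 0; qn (l.1 + l.2), 0]
def Qop (l : ℤ × ℤ) (h : ℤ × ℤ) : V →ₗ[F] V :=
  Matrix.toLin' !![q ^ (h.1 * l.1 + h.2 * l.2), 0; 0, q ^ (h.1 * (l.1 - 1) + h.2 * (l.2 + 1))]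
def Pop (l : ℤ × ℤ) : V →ₗ[F] V :=
  Matrix.toLin' !![(-1 : F) ^ l.2, 0; 0, (-1 : F) ^ (l.2 + 1)]
def Kop (l : ℤ × ℤ) : V →ₗ[F] V := Qop l (1, 1)
def Kinv (l : ℤ × ℤ) : V →ₗ[F] V := Qop l (-1, -1)

def ΔE (l m : ℤ × ℤ) : V ⊗[F] V →ₗ[F] V ⊗[F] V :=
  TensorProduct.map Eop (Kinv m) + TensorProduct.map (Pop l) Eop
def ΔF (l m : ℤ × ℤ) : V ⊗[F] V →ₗ[F] V ⊗[F] V :=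
  TensorProduct.map (Fop l) LinearMap.id + TensorProduct.map (Kop l ∘ₗ Pop l) (Fop m)
def ΔQ (l m : ℤ × ℤ) (h : ℤ × ℤ) : V ⊗[F] V →ₗ[F] V ⊗[F] V :=
  TensorProduct.map (Qop l h) (Qop m h)

def bV : Module.Basis (Fin 2) F V := Pi.basisFun F (Fin 2)
def bVV : Module.Basis (Fin 2 × Fin 2) F (V ⊗[F] V) := Module.Basis.tensorProduct bV bV

/-- `(λ,μ) = λ₁μ₁ − λ₂μ₂`. -/
def pr (a b : ℤ × ℤ) : ℤ := a.1 * b.1 - a.2 * b.2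
/-- `λ − α`. -/
def am (a : ℤ × ℤ) : ℤ × ℤ := (a.1 - 1, a.2 + 1)

/-- The operator `T_{λ,μ} : L(λ)⊗L(μ) → L(μ)⊗L(λ)` (the inverse braiding `Ř⁻¹`),
defined on the basis `v_i ⊗ v_j`; in each output the first factor lies in `L(μ)`. -/
def Tmap (l m : ℤ × ℤ) : V ⊗[F] V →ₗ[F] V ⊗[F] V :=
  bVV.constr F fun p =>
    !![ ((-1 : F) ^ (l.2 * m.2) * q ^ (-(pr m l))) • (v0 ⊗ₜ[F] v0),
        ((-1 : F) ^ (l.2 * (m.2 + 1)) * q ^ (-(pr (am m) l))) • (v1 ⊗ₜ[F] v0) ;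
        ((-1 : F) ^ ((l.2 + 1) * m.2)) •
          ( (q ^ (-(pr m (am l)))) • (v0 ⊗ₜ[F] v1)
            + ((-1 : F) ^ m.2 * q ^ (-(pr (am m) l)) * (q⁻¹ - q) * qn (m.1 + m.2))
              • (v1 ⊗ₜ[F] v0) ),
        ((-1 : F) ^ ((l.2 + 1) * (m.2 + 1)) * q ^ (-(pr (am m) (am l)))) • (v1 ⊗ₜ[F] v1) ]
      p.1 p.2


-- ===== auxiliary lemmas =====

lemma q_ne_zero : (q : F) ≠ 0 := RatFunc.X_ne_zero

lemma q_sub_inv_ne_zero : q - q⁻¹ ≠ 0 := by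
  intro h
  have h2 : q * q = 1 := by
    have := sub_eq_zero.mp h
    field_simp [q_ne_zero] at this
    linear_combination this
  have h3 : (Polynomial.X * Polynomial.X : Polynomial ℂ) = 1 := by
    apply IsFractionRing.injective (Polynomial ℂ) (RatFunc ℂ)
    simpa [q, RatFunc.algebraMap_X] using h2
  have := congrArg (Polynomial.eval 0) h3
  simp at this

lemma qn_key (N : ℤ) : (q⁻¹ - q) * qn N = q ^ (-N) - q ^ N := by
  have h : qn N * (q - q⁻¹) = q ^ N - q ^ (-N) :=
    div_mul_cancel₀ _ q_sub_inv_ne_zero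
  linear_combination -h

lemma my_sgn_sq (k : ℤ) : ((-1 : F) ^ k) * ((-1 : F) ^ k) = 1 := by
  rw [← zpow_add₀ (by norm_num : (-1:F) ≠ 0)]
  exact Even.neg_one_zpow ⟨k, by ring⟩

lemma my_sgn_mul_self (k : ℤ) : (-1 : F) ^ (k * k) = (-1 : F) ^ k := by
  rcases Int.even_or_odd k with h | h
  · rw [Even.neg_one_zpow (h.mul_left k), Even.neg_one_zpow h]
  · rw [Odd.neg_one_zpow (h.mul h), Odd.neg_one_zpow h]

lemma my_sgn_succ (k : ℤ) : (-1 : F) ^ (k + 1) = -((-1 : F) ^ k) := by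
  rw [zpow_add₀ (by norm_num : (-1:F) ≠ 0)]; ring

lemma my_sgn_mul_succ (k : ℤ) : (-1 : F) ^ (k * (k + 1)) = 1 :=
  Even.neg_one_zpow (Int.even_mul_succ_self k)

lemma my_sgn_succ_mul (k : ℤ) : (-1 : F) ^ ((k + 1) * k) = 1 := by
  rw [mul_comm]; exact my_sgn_mul_succ k

lemma my_sgn_succ_sq (k : ℤ) : (-1 : F) ^ ((k + 1) * (k + 1)) = -((-1 : F) ^ k) := by
  rw [my_sgn_mul_self (k+1), my_sgn_succ]

-- operator actions
lemma Eop_v0 : Eop v0 = 0 := by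
  funext i
  fin_cases i <;>
    simp [Eop, v0, Matrix.toLin'_apply, Matrix.mulVec, dotProduct,
      Fin.sum_univ_two, Pi.single_apply]

lemma Eop_v1 : Eop v1 = v0 := by
  funext i
  fin_cases i <;>
    simp [Eop, v0, v1, Matrix.toLin'_apply, Matrix.mulVec, dotProduct,
      Fin.sum_univ_two, Pi.single_apply]

lemma Fop_v0 (l : ℤ × ℤ) : Fop l v0 = qn (l.1 + l.2) • v1 := by
  funext i
  fin_cases i <;>
    simp [Fop, v0, v1, Matrix.toLin'_apply, Matrix.mulVec, dotProduct,
      Fin.sum_univ_two, Pi.single_apply]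

lemma KP_v0 (l : ℤ × ℤ) :
    (Kop l ∘ₗ Pop l) v0 = ((-1 : F) ^ l.2 * q ^ (l.1 + l.2)) • v0 := by
  funext i
  fin_cases i <;>
    simp [Kop, Qop, Pop, v0, Matrix.toLin'_apply, Matrix.mulVec, dotProduct,
      Fin.sum_univ_two, Pi.single_apply] <;> ring_nf

lemma Kinv_v1 (l : ℤ × ℤ) : Kinv l v1 = q ^ (-(l.1 + l.2)) • v1 := by
  funext i
  fin_cases i <;>
    simp [Kinv, Qop, v1, Matrix.toLin'_apply, Matrix.mulVec, dotProduct,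
      Fin.sum_univ_two, Pi.single_apply] <;> ring_nf

lemma Pop_v1 (l : ℤ × ℤ) : Pop l v1 = ((-1 : F) ^ (l.2 + 1)) • v1 := by
  funext i
  fin_cases i <;>
    simp [Pop, v1, Matrix.toLin'_apply, Matrix.mulVec, dotProduct,
      Fin.sum_univ_two, Pi.single_apply]

-- basis identification
lemma bVV_00 : bVV (0, 0) = v0 ⊗ₜ[F] v0 := by
  simp [bVV, Module.Basis.tensorProduct_apply', bV, Pi.basisFun_apply, v0]
lemma bVV_01 : bVV (0, 1) = v0 ⊗ₜ[F] v1 := by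
  simp [bVV, Module.Basis.tensorProduct_apply', bV, Pi.basisFun_apply, v0, v1]
lemma bVV_10 : bVV (1, 0) = v1 ⊗ₜ[F] v0 := by
  simp [bVV, Module.Basis.tensorProduct_apply', bV, Pi.basisFun_apply, v0, v1]
lemma bVV_11 : bVV (1, 1) = v1 ⊗ₜ[F] v1 := by
  simp [bVV, Module.Basis.tensorProduct_apply', bV, Pi.basisFun_apply, v1]

-- Tmap on the basis
lemma Tmap_v00 (l : ℤ × ℤ) :
    Tmap l l (v0 ⊗ₜ[F] v0)
      = ((-1 : F) ^ l.2 * q ^ (-(pr l l))) • (v0 ⊗ₜ[F] v0) := by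
  conv_lhs => rw [← bVV_00, Tmap, Module.Basis.constr_basis]
  simp [my_sgn_mul_self]

lemma Tmap_v01 (l : ℤ × ℤ) :
    Tmap l l (v0 ⊗ₜ[F] v1)
      = (q ^ (-(pr (am l) l))) • (v1 ⊗ₜ[F] v0) := by
  conv_lhs => rw [← bVV_01, Tmap, Module.Basis.constr_basis]
  simp [my_sgn_mul_succ]

lemma Tmap_v10 (l : ℤ × ℤ) :
    Tmap l l (v1 ⊗ₜ[F] v0)
      = (q ^ (-(pr l (am l)))) • (v0 ⊗ₜ[F] v1)
        + ((-1 : F) ^ l.2 * q ^ (-(pr (am l) l)) * (q⁻¹ - q) * qn (l.1 + l.2))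
            • (v1 ⊗ₜ[F] v0) := by
  conv_lhs => rw [← bVV_10, Tmap, Module.Basis.constr_basis]
  simp [my_sgn_succ_mul]

lemma Tmap_v11 (l : ℤ × ℤ) :
    Tmap l l (v1 ⊗ₜ[F] v1)
      = (-((-1 : F) ^ l.2) * q ^ (-(pr (am l) (am l)))) • (v1 ⊗ₜ[F] v1) := by
  conv_lhs => rw [← bVV_11, Tmap, Module.Basis.constr_basis]
  simp [my_sgn_succ_sq]

-- tensor computations
lemma DF_v00 (l : ℤ × ℤ) :
    ΔF l l (v0 ⊗ₜ[F] v0)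
      = qn (l.1 + l.2) • (v1 ⊗ₜ[F] v0)
        + ((-1 : F) ^ l.2 * q ^ (l.1 + l.2) * qn (l.1 + l.2)) • (v0 ⊗ₜ[F] v1) := by
  simp [ΔF, TensorProduct.map_tmul, Fop_v0, KP_v0, TensorProduct.smul_tmul',
    TensorProduct.tmul_smul, smul_smul, mul_comm, mul_assoc, mul_left_comm]

lemma DE_v11 (l : ℤ × ℤ) :
    ΔE l l (v1 ⊗ₜ[F] v1)
      = q ^ (-(l.1 + l.2)) • (v0 ⊗ₜ[F] v1)
        + ((-1 : F) ^ (l.2 + 1)) • (v1 ⊗ₜ[F] v0) := by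
  simp [ΔE, TensorProduct.map_tmul, Eop_v1, Kinv_v1, Pop_v1, TensorProduct.smul_tmul',
    TensorProduct.tmul_smul, smul_smul]


lemma comb2 (c1 c2 c3 d1 d2 : F) (u w : V ⊗[F] V)
    (h1 : c1 = d2) (h2 : c2 + c3 = d1) :
    c1 • u + c2 • w + c3 • w = d1 • w + d2 • u := by
  rw [add_assoc, ← add_smul, h1, h2, add_comm]

lemma comb3 (c1 c2 c3 d1 d2 : F) (u w : V ⊗[F] V)
    (h1 : c2 = d1) (h2 : c1 + c3 = d2) :
    c1 • w + (c2 • u + c3 • w) = d1 • u + d2 • w := by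
  rw [add_comm (c1 • w), add_assoc, ← add_smul, h1, add_comm c3 c1, h2]

/-- on `L(λ)⊗L(λ)` the operator `T_{λ,λ}` acts by the scalar
`a₁ = (−1)^{|λ|}q^{−(λ,λ)}` on `span{v₀⊗v₀, Δ(F)(v₀⊗v₀)}` and by the scalar
`a₂ = (−1)^{|λ|+1}q^{−(λ,λ)+2(λ₁+λ₂)}` on `span{v₁⊗v₁, Δ(E)(v₁⊗v₁)}`; moreover
`a₁ ≠ a₂`, so `T_{λ,λ}` is not a scalar multiple of the identity. -/
theorem Tmap_two_eigenvalues (l : ℤ × ℤ) (hl : l.1 + l.2 ≠ 0) :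
    let a₁ : F := (-1 : F) ^ l.2 * q ^ (-(pr l l))
    let a₂ : F := (-1 : F) ^ (l.2 + 1) * q ^ (-(pr l l) + 2 * (l.1 + l.2))
    (∀ x ∈ Submodule.span F {v0 ⊗ₜ[F] v0, ΔF l l (v0 ⊗ₜ[F] v0)}, Tmap l l x = a₁ • x) ∧
    (∀ x ∈ Submodule.span F {v1 ⊗ₜ[F] v1, ΔE l l (v1 ⊗ₜ[F] v1)}, Tmap l l x = a₂ • x) ∧
    a₁ ≠ a₂ ∧
    ∀ c : F, Tmap l l ≠ c • LinearMap.id := by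
  intro a₁ a₂
  set N : ℤ := l.1 + l.2 with hN
  set P : ℤ := pr l l with hP
  have hq : (q : F) ≠ 0 := q_ne_zero
  set s : F := (-1 : F) ^ l.2 with hs
  set A : F := q ^ N with hA
  set B : F := q ^ (-N) with hB
  set C : F := q ^ (-P) with hC
  have hAB : A * B = 1 := by
    rw [hA, hB, ← zpow_add₀ hq]; simp
  have hss : s * s = 1 := my_sgn_sq l.2
  have hqk : (q⁻¹ - q) * qn N = B - A := qn_key N
  have e1 : -(pr l (am l)) = N + -P := by simp only [pr, am, hN, hP]; ring
  have e2 : -(pr (am l) l) = N + -P := by simp only [pr, am, hN, hP]; ring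
  have e3 : -(pr (am l) (am l)) = N + (N + -P) := by simp only [pr, am, hN, hP]; ring
  have q1 : q ^ (-(pr l (am l))) = A * C := by
    rw [e1, zpow_add₀ hq N (-P), ← hA, ← hC]
  have q2 : q ^ (-(pr (am l) l)) = A * C := by
    rw [e2, zpow_add₀ hq N (-P), ← hA, ← hC]
  have q3 : q ^ (-(pr (am l) (am l))) = A * (A * C) := by
    rw [e3, zpow_add₀ hq N (N + -P), zpow_add₀ hq N (-P), ← hA, ← hC]
  have ha₁ : a₁ = s * C := rfl
  have ha₂ : a₂ = -s * (C * (A * A)) := by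
    show (-1 : F) ^ (l.2 + 1) * q ^ (-P + 2 * N) = _
    rw [my_sgn_succ, show -P + 2 * N = N + (N + -P) by ring,
      zpow_add₀ hq N (N + -P), zpow_add₀ hq N (-P), ← hA, ← hC, ← hs]
    ring
  -- Tmap on basis, rephrased
  have t00 : Tmap l l (v0 ⊗ₜ[F] v0) = a₁ • (v0 ⊗ₜ[F] v0) := Tmap_v00 l
  have t01 : Tmap l l (v0 ⊗ₜ[F] v1) = (A * C) • (v1 ⊗ₜ[F] v0) := by
    rw [Tmap_v01, q2]
  have t10 : Tmap l l (v1 ⊗ₜ[F] v0)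
      = (A * C) • (v0 ⊗ₜ[F] v1) + (s * (A * C) * (B - A)) • (v1 ⊗ₜ[F] v0) := by
    rw [Tmap_v10, q1, q2, ← hs]
    congr 2
    rw [mul_assoc, hqk]
  have t11 : Tmap l l (v1 ⊗ₜ[F] v1) = a₂ • (v1 ⊗ₜ[F] v1) := by
    rw [Tmap_v11, q3, ← hs, ha₂]
    ring_nf
  -- eigenvector computations
  have tDF : Tmap l l (ΔF l l (v0 ⊗ₜ[F] v0)) = a₁ • ΔF l l (v0 ⊗ₜ[F] v0) := by
    rw [DF_v00, ← hN, ← hs, ← hA, map_add, map_smul, map_smul, t10, t01, ha₁]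
    simp only [smul_add, smul_smul]
    exact comb2 _ _ _ _ _ _ _
      (by linear_combination (-(qn N * A * C)) * hss)
      (by linear_combination (s * qn N * C) * hAB)
  have tDE : Tmap l l (ΔE l l (v1 ⊗ₜ[F] v1)) = a₂ • ΔE l l (v1 ⊗ₜ[F] v1) := by
    rw [DE_v11, ← hN, ← hB, my_sgn_succ, ← hs, map_add, map_smul, map_smul,
      t01, t10, ha₂]
    simp only [smul_add, smul_smul]
    exact comb3 _ _ _ _ _ _ _
      (by linear_combination (s * A * C) * hAB)
      (by linear_combination (-(A * B * C)) * hss)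
  -- a₁ ≠ a₂
  have hne12 : a₁ ≠ a₂ := by
    intro h
    rw [ha₁, ha₂] at h
    have hs0 : s ≠ 0 := by
      intro h0; rw [h0, zero_mul] at hss; exact one_ne_zero hss.symm
    have hC0 : C ≠ 0 := zpow_ne_zero _ hq
    have hAA : A * A = -1 := by
      have h1 : s * C * (1 + A * A) = 0 := by linear_combination h
      have h2 : (1 : F) + A * A = 0 := by
        rcases mul_eq_zero.mp h1 with h3 | h3
        · exact absurd (mul_eq_zero.mp h3) (by push_neg; exact ⟨hs0, hC0⟩)
        · exact h3
      linear_combination h2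
    have h2N : q ^ (2 * N) = -1 := by
      rw [two_mul, zpow_add₀ hq N N, ← hA]; exact hAA
    have hn0 : 2 * N ≠ 0 := by
      simp only [hN]; omega
    have key : ∀ m : ℕ, 0 < m → (q : F) ^ m ≠ -1 := by
      intro m hm hcon
      have h3 : (Polynomial.X ^ m : Polynomial ℂ) = -1 := by
        apply IsFractionRing.injective (Polynomial ℂ) (RatFunc ℂ)
        rw [map_pow, map_neg, map_one, RatFunc.algebraMap_X]
        exact hcon
      have := congrArg (Polynomial.eval 0) h3
      simp [zero_pow hm.ne'] at this
    rcases lt_or_ge (2 * N) 0 with hlt | hge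
    · have hma : (((2 * N).natAbs : ℤ)) = -(2 * N) := by omega
      have : (q : F) ^ ((2 * N).natAbs) = -1 := by
        rw [← zpow_natCast, hma, zpow_neg, h2N]
        norm_num
      exact key _ (by omega) this
    · have hma : (((2 * N).natAbs : ℤ)) = 2 * N := by omega
      have : (q : F) ^ ((2 * N).natAbs) = -1 := by
        rw [← zpow_natCast, hma]
        exact h2N
      exact key _ (by omega) this
  refine ⟨?_, ?_, hne12, ?_⟩
  · intro x hx
    induction hx using Submodule.span_induction with
    | mem x h =>
      rcases h with h | h
      · subst h; exact t00
      · simp only [Set.mem_singleton_iff] at h; subst h; exact tDF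
    | zero => simp
    | add x y _ _ hx hy => rw [map_add, hx, hy, smul_add]
    | smul c x _ hx => rw [map_smul, hx, smul_comm]
  · intro x hx
    induction hx using Submodule.span_induction with
    | mem x h =>
      rcases h with h | h
      · subst h; exact t11
      · simp only [Set.mem_singleton_iff] at h; subst h; exact tDE
    | zero => simp
    | add x y _ _ hx hy => rw [map_add, hx, hy, smul_add]
    | smul c x _ hx => rw [map_smul, hx, smul_comm]
  · intro c hcon
    have h00 := congrArg (fun f : V ⊗[F] V →ₗ[F] V ⊗[F] V => f (v0 ⊗ₜ[F] v0)) hcon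
    have h11 := congrArg (fun f : V ⊗[F] V →ₗ[F] V ⊗[F] V => f (v1 ⊗ₜ[F] v1)) hcon
    simp only [t00, t11, LinearMap.smul_apply, LinearMap.id_apply] at h00 h11
    have hv00 : (v0 ⊗ₜ[F] v0 : V ⊗[F] V) ≠ 0 := by
      rw [← bVV_00]; exact bVV.ne_zero _
    have hv11 : (v1 ⊗ₜ[F] v1 : V ⊗[F] V) ≠ 0 := by
      rw [← bVV_11]; exact bVV.ne_zero _
    have e00 : a₁ = c := smul_left_injective F hv00 h00
    have e11 : a₂ = c := smul_left_injective F hv11 h11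
    exact hne12 (e00.trans e11.symm)
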